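/- Let d ≥ 1, w ∈ ℝ^d, b ∈ ℝ with b < 0 and Σ_{i=1}^d w_i + b ≥ 0. Call an edge of the hypercube {0,1}^d a pair (u,v) with u,v ∈ {0,1}^d differing in exactly one coordinate; say the hyperplane w·x + b = 0 cuts the edge (u,v) if w·u + b < 0 and w·v + b ≥ 0. Then the number of edges of {0,1}^d cut by the hyperplane is at least d. -/

import Mathlib

/-- vertex at step `k` of the cyclic path starting at direction `i`. -/
def vrt (d : ℕ) [NeZero d] (i : Fin d) (k : ℕ) : Fin d → Bool :=
  fun j => decide ((j - i).val < k)

lemma card_vrt (d : ℕ) [NeZero d] (i : Fin d) (k : ℕ) (hk : k ≤ d) :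
    (Finset.univ.filter fun j => vrt d i k j = true).card = k := by
  have h1 : (Finset.univ.filter fun j => vrt d i k j = true).card
      = (Finset.univ.filter fun x : Fin d => x.val < k).card := by
    apply Finset.card_bij (fun j _ => j - i)
    · intro a ha; simp only [vrt, Finset.mem_filter, Finset.mem_univ, true_and,
        decide_eq_true_eq] at ha ⊢; exact ha
    · intro a _ b _ h
      have := congrArg (· + i) h
      simpa using this
    · intro c hc
      refine ⟨c + i, ?_, by simp⟩
      simp only [vrt, Finset.mem_filter, Finset.mem_univ, true_and,
        decide_eq_true_eq] at hc ⊢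
      simpa using hc
  rw [h1]
  rw [show k = (Finset.range k).card from (Finset.card_range k).symm]
  apply Finset.card_bij (fun x _ => x.val)
  · intro a ha; simp only [Finset.mem_filter, Finset.mem_univ, true_and] at ha
    simpa using ha
  · intro a _ b _ h; exact Fin.val_injective h
  · intro c hc
    simp only [Finset.mem_range] at hc
    exact ⟨⟨c, lt_of_lt_of_le hc hk⟩, by simpa using hc, rfl⟩

open Fin.NatCast in
theorem stmt4 (d : ℕ) (hd : 1 ≤ d) (w : Fin d → ℝ) (b : ℝ)
    (hb : b < 0) (hwb : 0 ≤ ∑ i, w i + b) :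
    d ≤ Set.ncard {e : (Fin d → Bool) × (Fin d → Bool) |
      (∃! i, e.1 i ≠ e.2 i) ∧
      (∑ i, w i * (if e.1 i then 1 else 0)) + b < 0 ∧
      0 ≤ (∑ i, w i * (if e.2 i then 1 else 0)) + b} := by
  classical
  haveI : NeZero d := ⟨by omega⟩
  set g : Fin d → ℕ → ℝ :=
    fun i k => (∑ j, w j * (if vrt d i k j then 1 else 0)) + b with hgdef
  have hg0 : ∀ i, g i 0 = b := by
    intro i; simp [hgdef, vrt]
  have hgd : ∀ i, g i d = ∑ j, w j + b := by
    intro i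
    simp only [hgdef, vrt]
    congr 1
    apply Finset.sum_congr rfl
    intro j _
    simp [Fin.is_lt]
  have hex : ∀ i : Fin d, ∃ k, 0 ≤ g i k := fun i => ⟨d, by rw [hgd]; exact hwb⟩
  set K : Fin d → ℕ := fun i => Nat.find (hex i) with hKdef
  have hK1 : ∀ i, 1 ≤ K i := by
    intro i
    by_contra h
    have h0 : K i = 0 := by omega
    have := Nat.find_spec (hex i)
    rw [show Nat.find (hex i) = K i from rfl, h0, hg0] at this
    linarith
  have hKd : ∀ i, K i ≤ d := fun i => Nat.find_le (by rw [hgd]; exact hwb)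
  set k : Fin d → ℕ := fun i => K i - 1 with hkdef
  have hkr : ∀ i, k i = K i - 1 := fun i => rfl
  have hkd : ∀ i, k i < d := fun i => by have := hKd i; have := hK1 i; rw [hkr]; omega
  have hkK : ∀ i, k i + 1 = K i := fun i => by have := hK1 i; rw [hkr]; omega
  have hneg : ∀ i, g i (k i) < 0 := by
    intro i
    have := Nat.find_min (hex i) (m := k i)
      (by rw [show Nat.find (hex i) = K i from rfl]; have := hK1 i; rw [hkr]; omega)
    linarith [not_le.mp this]
  have hpos : ∀ i, 0 ≤ g i (k i + 1) := by
    intro i; rw [hkK]; exact Nat.find_spec (hex i)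
  -- the crossing edge in direction i
  set e : Fin d → (Fin d → Bool) × (Fin d → Bool) :=
    fun i => (vrt d i (k i), vrt d i (k i + 1)) with hedef
  -- flipped coordinate facts
  have hflip : ∀ i : Fin d, ∀ j : Fin d,
      vrt d i (k i) j ≠ vrt d i (k i + 1) j ↔ j = (k i : Fin d) + i := by
    intro i j
    constructor
    · intro h
      simp only [vrt, ne_eq, decide_eq_decide] at h
      have hval : (j - i).val = k i := by omega
      have : (j - i) = ((k i : ℕ) : Fin d) := by
        apply Fin.val_injective
        rw [hval, Fin.val_cast_of_lt (hkd i)]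
      rw [sub_eq_iff_eq_add] at this
      exact this
    · intro h
      subst h
      simp only [vrt, ne_eq, decide_eq_decide]
      have : ((k i : Fin d) + i - i) = (k i : Fin d) := add_sub_cancel_right _ _
      rw [this, Fin.val_cast_of_lt (hkd i)]
      omega
  have hmem : ∀ i, e i ∈ {e : (Fin d → Bool) × (Fin d → Bool) |
      (∃! i, e.1 i ≠ e.2 i) ∧
      (∑ i, w i * (if e.1 i then 1 else 0)) + b < 0 ∧
      0 ≤ (∑ i, w i * (if e.2 i then 1 else 0)) + b} := by
    intro i
    refine ⟨⟨(k i : Fin d) + i, ?_, ?_⟩, hneg i, hpos i⟩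
    · exact (hflip i _).mpr rfl
    · intro j hj; exact (hflip i j).mp hj
  have hinj : Function.Injective e := by
    intro i i' h
    have h1 : vrt d i (k i) = vrt d i' (k i') := congrArg Prod.fst h
    have h2 : vrt d i (k i + 1) = vrt d i' (k i' + 1) := congrArg Prod.snd h
    -- same number of ones, so same k
    have hkk : k i = k i' := by
      have := card_vrt d i (k i) (le_of_lt (hkd i))
      have h2' := card_vrt d i' (k i') (le_of_lt (hkd i'))
      rw [← this, ← h2', h1]
    -- flipped coordinates coincide
    have hc : ((k i : Fin d) + i) = ((k i' : Fin d) + i') := by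
      apply (hflip i' ((k i : Fin d) + i)).mp
      rw [← h1, ← h2]
      exact (hflip i _).mpr rfl
    rw [hkk] at hc
    exact add_left_cancel hc
  calc d = Nat.card (Fin d) := by simp
    _ = Nat.card (Set.range e) := (Nat.card_range_of_injective hinj).symm
    _ = (Set.range e).ncard := rfl
    _ ≤ _ := Set.ncard_le_ncard (Set.range_subset_iff.mpr hmem) (Set.toFinite _)
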